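/- Let γ > 1 and 0 < a < b < ∞. Then there exists a constant C = C(a,b,γ) > 0 such that for all ρ ∈ [0,∞) and all r ∈ [a,b]: 0 ≤ p(ρ) − p'(r)(ρ − r) − p(r) ≤ C · E(ρ|r), where p(s) = s^γ. -/

import Mathlib

/-- The pressure potential `P(s) = (s^γ − s)/(γ − 1)` associated with `p(s) = s^γ`. -/
noncomputable def Ppot (γ : ℝ) : ℝ → ℝ := fun s => (s ^ γ - s) / (γ - 1)

/-- The relative pressure energy `E(ρ|r) = P(ρ) − P'(r)(ρ − r) − P(r)`. -/
noncomputable def relE (γ ρ r : ℝ) : ℝ :=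
  Ppot γ ρ - deriv (Ppot γ) r * (ρ - r) - Ppot γ r

/-- The pressure excess `p(ρ) − p'(r)(ρ − r) − p(r)`, `p(s) = s^γ`, is nonnegative and
dominated by a constant multiple of the relative energy, uniformly for `r ∈ [a,b]`. -/
theorem stmt_5 (γ a b : ℝ) (hγ : 1 < γ) (ha : 0 < a) (hab : a < b) :
    ∃ C > 0, ∀ ρ r : ℝ, 0 ≤ ρ → r ∈ Set.Icc a b →
      0 ≤ ρ ^ γ - deriv (fun s : ℝ => s ^ γ) r * (ρ - r) - r ^ γ ∧
      ρ ^ γ - deriv (fun s : ℝ => s ^ γ) r * (ρ - r) - r ^ γ ≤ C * relE γ ρ r := by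
  refine ⟨γ - 1, by linarith, fun ρ r hρ hr => ?_⟩
  obtain ⟨har, hrb⟩ := hr
  have hr0 : 0 < r := lt_of_lt_of_le ha har
  have hd : deriv (fun s : ℝ => s ^ γ) r = γ * r ^ (γ - 1) :=
    Real.deriv_rpow_const r γ
  have hP : deriv (Ppot γ) r = (γ * r ^ (γ - 1) - 1) / (γ - 1) := by
    have h1 : HasDerivAt (fun s : ℝ => s ^ γ - s) (γ * r ^ (γ - 1) - 1) r :=
      (Real.hasDerivAt_rpow_const (Or.inl hr0.ne')).sub (hasDerivAt_id r)
    exact (h1.div_const (γ - 1)).deriv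
  have hrg : r ^ (γ - 1) = r ^ γ / r := by
    rw [Real.rpow_sub hr0, Real.rpow_one]
  have key : r ^ γ + γ * r ^ (γ - 1) * (ρ - r) ≤ ρ ^ γ := by
    have hs : -1 ≤ ρ / r - 1 := by
      have : 0 ≤ ρ / r := div_nonneg hρ hr0.le
      linarith
    have hb := one_add_mul_self_le_rpow_one_add hs hγ.le
    have h2 : (1 + (ρ / r - 1)) ^ γ = ρ ^ γ / r ^ γ := by
      rw [show 1 + (ρ / r - 1) = ρ / r by ring, Real.div_rpow hρ hr0.le]
    rw [h2] at hb
    have hrγ : 0 < r ^ γ := Real.rpow_pos_of_pos hr0 γ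
    have := mul_le_mul_of_nonneg_left hb hrγ.le
    rw [mul_div_cancel₀ _ hrγ.ne'] at this
    calc r ^ γ + γ * r ^ (γ - 1) * (ρ - r)
        = r ^ γ * (1 + γ * (ρ / r - 1)) := by
          rw [hrg]; field_simp
      _ ≤ ρ ^ γ := this
  have hE : (γ - 1) * relE γ ρ r = ρ ^ γ - γ * r ^ (γ - 1) * (ρ - r) - r ^ γ := by
    unfold relE
    rw [hP]
    unfold Ppot
    have hγ1 : γ - 1 ≠ 0 := by linarith
    field_simp
    ring
  rw [hd, hE]
  constructor <;> linarith
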